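/- In the group G = ⟨x, y, t | x^t = x^p, y^{t^{-1}} = y^p, [x,y] = 1, [[x, y^{j t^i}], x] = 1 (i,j ∈ ℤ)⟩, for every i ≥ 0 the relation [x, y^{t^i}]^{p^i} = 1 holds. -/

import Mathlib

/-- The commutator `[a,b] = a⁻¹b⁻¹ab`. -/
def br {G : Type*} [Group G] (a b : G) : G := a⁻¹ * b⁻¹ * a * b

/-- Conjugation `a^b = b⁻¹ab`. -/
def cnj {G : Type*} [Group G] (a b : G) : G := b⁻¹ * a * b

namespace MikhailovGroup

/-- The generator `x` of the free group on three letters. -/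
def X : FreeGroup (Fin 3) := FreeGroup.of 0

/-- The generator `y` of the free group on three letters. -/
def Y : FreeGroup (Fin 3) := FreeGroup.of 1

/-- The generator `t` of the free group on three letters. -/
def T : FreeGroup (Fin 3) := FreeGroup.of 2

/-- The relations `x^t = x^p`, `y^{t⁻¹} = y^p`, `[x,y] = 1`, and
`[[x, y^{j t^i}], x] = 1` for all `i, j ∈ ℤ`. -/
def rels (p : ℕ) : Set (FreeGroup (Fin 3)) :=
  {cnj X T * (X ^ p)⁻¹, cnj Y T⁻¹ * (Y ^ p)⁻¹, br X Y} ∪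
    ⋃ (i : ℤ) (j : ℤ), {br (br X (cnj (Y ^ j) (T ^ i))) X}

/-- The group `G = ⟨x, y, t | x^t = x^p, y^{t⁻¹} = y^p, [x,y] = 1,
[[x, y^{j t^i}], x] = 1 (i,j ∈ ℤ)⟩`. -/
def G (p : ℕ) : Type := PresentedGroup (rels p)

instance (p : ℕ) : Group (G p) := by unfold G; infer_instance

/-- The image of the generator `x` in `G`. -/
def x (p : ℕ) : G p := PresentedGroup.of 0

/-- The image of the generator `y` in `G`. -/
def y (p : ℕ) : G p := PresentedGroup.of 1

/-- The image of the generator `t` in `G`. -/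
def t (p : ℕ) : G p := PresentedGroup.of 2

/-- The normal closure `H = ⟨x, y⟩^G`. -/
def H (p : ℕ) : Subgroup (G p) := Subgroup.normalClosure {x p, y p}

end MikhailovGroup

section helpers

variable {M : Type*} [Group M]

lemma cnj_mul (a b g : M) : cnj (a * b) g = cnj a g * cnj b g := by simp [cnj]; group
lemma cnj_inv (a g : M) : cnj a⁻¹ g = (cnj a g)⁻¹ := by simp [cnj]; group
lemma cnj_pow (a g : M) (n : ℕ) : cnj (a ^ n) g = cnj a g ^ n := by
  induction n with
  | zero => simp [cnj]
  | succ k ih => rw [pow_succ, cnj_mul, ih, pow_succ]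
lemma cnj_br (a b g : M) : cnj (br a b) g = br (cnj a g) (cnj b g) := by
  simp [br, cnj_mul, cnj_inv]
lemma cnj_cnj (a b c : M) : cnj (cnj a b) c = cnj a (b * c) := by simp [cnj]; group
lemma cnj_one (a : M) : cnj a 1 = a := by simp [cnj]

lemma commute_of_br {a c : M} (h : br c a = 1) : Commute a c := by
  have h' : c⁻¹ * a⁻¹ * c * a = 1 := h
  have : c * a = a * c := by
    calc c * a = a * c * (c⁻¹ * a⁻¹ * c * a) := by group
    _ = a * c := by rw [h', mul_one]
  exact this.symm

lemma conj_pow_aux (a b : M) (h : Commute a (br a b)) (n : ℕ) :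
    b⁻¹ * a ^ n * b = a ^ n * br a b ^ n := by
  induction n with
  | zero => simp
  | succ k ih =>
    have key : b⁻¹ * a * b = a * br a b := by unfold br; group
    have : b⁻¹ * a ^ (k+1) * b = (b⁻¹ * a ^ k * b) * (b⁻¹ * a * b) := by group
    rw [this, ih, key, pow_succ, pow_succ]
    have hcp : br a b ^ k * a = a * br a b ^ k := ((h.pow_right k).symm).eq
    calc a ^ k * br a b ^ k * (a * br a b)
        = a ^ k * (br a b ^ k * a) * br a b := by group
      _ = a ^ k * (a * br a b ^ k) * br a b := by rw [hcp]
      _ = a ^ k * a * (br a b ^ k * br a b) := by group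

lemma br_pow_left (a b : M) (h : Commute a (br a b)) (n : ℕ) :
    br (a ^ n) b = br a b ^ n := by
  have := conj_pow_aux a b h n
  unfold br
  calc (a ^ n)⁻¹ * b⁻¹ * a ^ n * b = (a ^ n)⁻¹ * (b⁻¹ * a ^ n * b) := by group
  _ = (a ^ n)⁻¹ * (a ^ n * br a b ^ n) := by rw [this]
  _ = br a b ^ n := by group
end helpers

open MikhailovGroup in
/-- in `G`, for every `i ≥ 0` the relation `[x, y^{t^i}]^{p^i} = 1` holds. -/
theorem mikhailov_commutator_power_trivial (p : ℕ) (hp : p.Prime) :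
    ∀ i : ℕ, br (x p) (cnj (y p) (t p ^ i)) ^ p ^ i = 1 := by
  classical
  set φ := PresentedGroup.mk (rels p) with hφ
  have rel_one : ∀ r ∈ rels p, φ r = 1 := fun r hr =>
    (QuotientGroup.eq_one_iff r).2 (Subgroup.subset_normalClosure hr)
  have hX : φ X = x p := rfl
  have hY : φ Y = y p := rfl
  have hT : φ T = t p := rfl
  -- relation 1: x^t = x^p
  have h1 : cnj (x p) (t p) = x p ^ p := by
    have hm : cnj X T * (X ^ p)⁻¹ ∈ rels p :=
      Set.mem_union_left _ (by left; rfl)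
    have := rel_one _ hm
    rw [map_mul, map_inv, mul_inv_eq_one] at this
    have e1 : φ (cnj X T) = cnj (x p) (t p) := by
      simp [cnj, map_mul, map_inv, hX, hT]; rfl
    have e2 : φ (X ^ p) = x p ^ p := by rw [map_pow, hX]; rfl
    rw [e1, e2] at this
    exact this
  -- relation 3: [x, y] = 1
  have h2 : br (x p) (y p) = 1 := by
    have hm : br X Y ∈ rels p := Set.mem_union_left _ (by right; right; rfl)
    have := rel_one _ hm
    simp [br, map_mul, map_inv, hX, hY] at this; exact this
  -- relation 4: [[x, y^{t^n}], x] = 1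
  have h4 : ∀ n : ℕ, br (br (x p) (cnj (y p) (t p ^ n))) (x p) = 1 := by
    intro n
    have hm : br (br X (cnj (Y ^ (1 : ℤ)) (T ^ (n : ℤ)))) X ∈ rels p := by
      refine Set.mem_union_right _ ?_
      simp only [Set.mem_iUnion]
      exact ⟨(n : ℤ), 1, rfl⟩
    have := rel_one _ hm
    rw [zpow_one, zpow_natCast] at this
    simp [br, cnj, map_mul, map_inv, map_pow, hX, hY, hT] at this ⊢; exact this
  intro i
  induction i with
  | zero =>
    simpa [cnj_one] using h2
  | succ n ih =>
    set z := cnj (y p) (t p ^ (n + 1)) with hzdef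
    have hz : cnj (cnj (y p) (t p ^ n)) (t p) = z := by
      rw [cnj_cnj, ← pow_succ]
    have hc : Commute (x p) (br (x p) z) := commute_of_br (h4 (n + 1))
    have key : br (x p ^ p) z = br (x p) z ^ p := br_pow_left _ _ hc p
    have step : br (x p ^ p) z ^ p ^ n = 1 := by
      have h := congrArg (fun w => cnj w (t p)) ih
      simp only [cnj_pow, cnj_br, cnj_cnj] at h
      rw [← pow_succ] at h
      rw [h1] at h
      simpa [cnj, hzdef] using h
    calc br (x p) z ^ p ^ (n + 1) = (br (x p) z ^ p) ^ p ^ n := by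
          rw [← pow_mul, ← pow_succ']
      _ = br (x p ^ p) z ^ p ^ n := by rw [key]
      _ = 1 := step
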